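/- arXiv:2006.10491 — 5 statements merged into one kernel-verified Lean document; each statement's English description precedes it below -/
import Mathlib

section
/- The sequence of labeling functions (λᵏ)_{k∈ℕ} defined on the vertices of the extended reachability game is monotone nondecreasing: for all k ∈ ℕ and all vertices v, λᵏ(v) ≤ λᵏ⁺¹(v). -/
/-- A (turn-based) reachability game: edges, an owner for every vertex, and a target
set for every player.  Every vertex has a successor. -/
structure RGame (V P : Type) where
  edge : V → V → Prop
  owner : V → P
  target : P → Set V
  succ_nonempty : ∀ v, ∃ v', edge v v'

def RGame.IsPlay {V P : Type} (G : RGame V P) (ρ : ℕ → V) : Prop :=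
  ∀ n, G.edge (ρ n) (ρ (n + 1))

/-- Boolean gain, as a proposition: player `i` wins `ρ` iff `ρ` visits `target i`. -/
def RGame.Gain {V P : Type} (G : RGame V P) (i : P) (ρ : ℕ → V) : Prop :=
  ∃ n, ρ n ∈ G.target i

/-- `ρ` is `lam`-consistent: whenever `lam (ρ n)` holds (i.e. `λ(ρₙ) = 1`), the owner
of `ρₙ` wins the suffix `ρ_{≥ n}`. -/
def RGame.Consistent {V P : Type} (G : RGame V P) (lam : V → Prop) (ρ : ℕ → V) : Prop :=
  ∀ n, lam (ρ n) → G.Gain (G.owner (ρ n)) (fun m => ρ (n + m))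

/-- The sequence of labeling functions `λᵏ` (value `1` encoded as `True`):
`λ⁰ ≡ 0` and `λᵏ⁺¹(v) = max_{v' ∈ Succ(v)} min {Gainᵢ(ρ) : ρ play from v', ρ ⊨ λᵏ}`
where `v` belongs to player `i`. -/
def RGame.lamSeq {V P : Type} (G : RGame V P) : ℕ → V → Prop
  | 0 => fun _ => False
  | k + 1 => fun v => ∃ v', G.edge v v' ∧
      ∀ ρ : ℕ → V, ρ 0 = v' → G.IsPlay ρ → G.Consistent (G.lamSeq k) ρ → G.Gain (G.owner v) ρ

/-- The sequence `(λᵏ)` is pointwise monotone nondecreasing: `λᵏ(v) ≤ λᵏ⁺¹(v)`. -/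
theorem stmt4 {V P : Type} (G : RGame V P) :
    ∀ (k : ℕ) (v : V), G.lamSeq k v → G.lamSeq (k + 1) v := by
  intro k
  induction k with
  | zero => intro v h; exact h.elim
  | succ k ih =>
    intro v h
    obtain ⟨v', he, hρ⟩ := h
    refine ⟨v', he, fun ρ h0 hp hc => hρ ρ h0 hp ?_⟩
    exact fun n hn => hc n (ih _ hn)
end

section
/- Region equivalence is preserved under clock resets: if ν ≈ ν' and Y ⊆ C is a set of clocks, then [Y ← 0]ν ≈ [Y ← 0]ν', where [Y ← 0]ν sets all clocks in Y to 0 and leaves the others unchanged. -/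
/-- Region equivalence of clock valuations `ν, ν' : Fin k → ℝ≥0` with respect to the
per-clock maximal constants `x i`:
(i) equal integral parts, or both values exceed `x i`;
(ii) for bounded clocks, fractional part zero iff the other's fractional part is zero;
(iii) for pairs of bounded clocks, the same ordering of fractional parts. -/
def RegEquiv (k : ℕ) (x : Fin k → ℕ) (ν ν' : Fin k → NNReal) : Prop :=
  (∀ i, ⌊(ν i : ℝ)⌋ = ⌊(ν' i : ℝ)⌋ ∨ ((x i : ℝ) < (ν i : ℝ) ∧ (x i : ℝ) < (ν' i : ℝ))) ∧
  (∀ i, (ν i : ℝ) ≤ (x i : ℝ) →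
    (Int.fract ((ν i : ℝ)) = 0 ↔ Int.fract ((ν' i : ℝ)) = 0)) ∧
  (∀ i j, i ≠ j → (ν i : ℝ) ≤ (x i : ℝ) → (ν j : ℝ) ≤ (x j : ℝ) →
    (Int.fract ((ν i : ℝ)) ≤ Int.fract ((ν j : ℝ)) ↔
      Int.fract ((ν' i : ℝ)) ≤ Int.fract ((ν' j : ℝ))))

/-- `[Y ← 0]ν` : reset the clocks in `Y` to `0`, leave the others unchanged. -/
def resetVal {k : ℕ} (Y : Finset (Fin k)) (ν : Fin k → NNReal) : Fin k → NNReal :=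
  fun i => if i ∈ Y then 0 else ν i

/-- Region equivalence is preserved under clock resets. -/
theorem stmt13 (k : ℕ) (x : Fin k → ℕ) (ν ν' : Fin k → NNReal)
    (hequiv : RegEquiv k x ν ν') (Y : Finset (Fin k)) :
    RegEquiv k x (resetVal Y ν) (resetVal Y ν') := by
  obtain ⟨h1, h2, h3⟩ := hequiv
  refine ⟨?_, ?_, ?_⟩
  · intro i
    by_cases hi : i ∈ Y <;> simp [resetVal, hi]
    exact h1 i
  · intro i hle
    by_cases hi : i ∈ Y <;> simp_all [resetVal, hi]
  · intro i j hij hi' hj'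
    by_cases hi : i ∈ Y <;> by_cases hj : j ∈ Y <;>
      simp_all [resetVal, Int.fract_nonneg]
    constructor <;> intro h
    · have := (h2 i hi').mp (le_antisymm h (Int.fract_nonneg _)); simp [this]
    · have := (h2 i hi').mpr (le_antisymm h (Int.fract_nonneg _)); simp [this]
end

section
/- Region equivalence satisfies the time-abstract successor property: if ν ≈ ν' and d ∈ ℝ≥0, then there exists d' ∈ ℝ≥0 such that ν + d ≈ ν' + d'. -/
private lemma floor01 {t : ℝ} (h0 : 0 ≤ t) (h2 : t < 2) :
    ⌊t⌋ = if 1 ≤ t then 1 else 0 := by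
  split_ifs with h
  · exact Int.floor_eq_iff.mpr ⟨by exact_mod_cast h, by push_cast; linarith⟩
  · exact Int.floor_eq_iff.mpr ⟨by exact_mod_cast h0, by push_cast; linarith [not_le.mp h]⟩

private lemma fract01 {t : ℝ} (h0 : 0 ≤ t) (h2 : t < 2) :
    Int.fract t = if 1 ≤ t then t - 1 else t := by
  have h := Int.self_sub_floor t
  rw [← h, floor01 h0 h2]
  split_ifs <;> push_cast <;> ring

private lemma fract_zero01 {t : ℝ} (h0 : 0 ≤ t) (h2 : t < 2) :
    Int.fract t = 0 ↔ t = 0 ∨ t = 1 := by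
  rw [fract01 h0 h2]
  split_ifs with h
  · constructor
    · intro h'; right; linarith
    · rintro (h' | h') <;> linarith
  · constructor
    · intro h'; left; exact h'
    · rintro (h' | h') <;> linarith

private lemma compshift (v : ℝ) (mm : ℤ) (γ : ℝ) :
    ⌊v + ((mm : ℝ) + γ)⌋ = ⌊v⌋ + mm + ⌊Int.fract v + γ⌋ ∧
    Int.fract (v + ((mm : ℝ) + γ)) = Int.fract (Int.fract v + γ) := by
  have hv : v + ((mm : ℝ) + γ) = (Int.fract v + γ) + ((⌊v⌋ + mm : ℤ) : ℝ) := by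
    push_cast
    linarith [Int.floor_add_fract v]
  rw [hv, Int.floor_add_intCast, Int.fract_add_intCast]
  exact ⟨by ring, rfl⟩

/-- Time-abstract successor property: if `ν ≈ ν'` and `d ≥ 0`, then there is `d' ≥ 0`
with `ν + d ≈ ν' + d'`. -/
theorem stmt14 (k : ℕ) (x : Fin k → ℕ) (ν ν' : Fin k → NNReal)
    (hequiv : RegEquiv k x ν ν') (d : NNReal) :
    ∃ d' : NNReal, RegEquiv k x (fun i => ν i + d) (fun i => ν' i + d') := by
  classical
  obtain ⟨h1, h2, h3⟩ := hequiv
  have hDnn : (0:ℝ) ≤ (d:ℝ) := d.coe_nonneg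
  set c : ℝ := Int.fract (d:ℝ) with hc
  set m : ℤ := ⌊(d:ℝ)⌋ with hm
  have hc0 : 0 ≤ c := Int.fract_nonneg _
  have hc1 : c < 1 := Int.fract_lt_one _
  have hm0 : (0:ℝ) ≤ (m:ℝ) := by
    have : (0:ℤ) ≤ m := by rw [hm]; exact Int.floor_nonneg.mpr hDnn
    exact_mod_cast this
  have hdmc : (d:ℝ) = (m:ℝ) + c := by
    rw [hm, hc]; exact (Int.floor_add_fract _).symm
  -- facts about bounded clocks
  have hfl : ∀ i, (ν i:ℝ) ≤ x i → ⌊(ν i:ℝ)⌋ = ⌊(ν' i:ℝ)⌋ := by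
    intro i hi
    rcases h1 i with h | h
    · exact h
    · exact absurd h.1 (not_lt.mpr hi)
  have hle : ∀ i j, (ν i:ℝ) ≤ x i → (ν j:ℝ) ≤ x j →
      (Int.fract (ν i:ℝ) ≤ Int.fract (ν j:ℝ) ↔
        Int.fract (ν' i:ℝ) ≤ Int.fract (ν' j:ℝ)) := by
    intro i j hi hj
    by_cases hij : i = j
    · subst hij; simp
    · exact h3 i j hij hi hj
  have hlt : ∀ i j, (ν i:ℝ) ≤ x i → (ν j:ℝ) ≤ x j →
      (Int.fract (ν i:ℝ) < Int.fract (ν j:ℝ) ↔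
        Int.fract (ν' i:ℝ) < Int.fract (ν' j:ℝ)) := by
    intro i j hi hj
    rw [← not_le, ← not_le, hle j i hj hi]
  have heqf : ∀ i j, (ν i:ℝ) ≤ x i → (ν j:ℝ) ≤ x j →
      (Int.fract (ν i:ℝ) = Int.fract (ν j:ℝ) ↔
        Int.fract (ν' i:ℝ) = Int.fract (ν' j:ℝ)) := by
    intro i j hi hj
    rw [le_antisymm_iff, le_antisymm_iff, hle i j hi hj, hle j i hj hi]
  -- construct the fractional part `c'` of the delay for `ν'`
  obtain ⟨c', hc'0, hc'1, hcz, hcp, hM⟩ :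
      ∃ c' : ℝ, 0 ≤ c' ∧ c' < 1 ∧ (c = 0 → c' = 0) ∧ (0 < c → 0 < c') ∧
        ∀ i, (ν i:ℝ) ≤ x i →
          ((1 ≤ Int.fract (ν i:ℝ) + c ↔ 1 ≤ Int.fract (ν' i:ℝ) + c') ∧
           (Int.fract (ν i:ℝ) + c = 1 ↔ Int.fract (ν' i:ℝ) + c' = 1)) := by
    by_cases hcc : c = 0
    · refine ⟨0, le_refl _, one_pos, fun _ => rfl, fun h => absurd hcc h.ne', fun i hi => ?_⟩
      have fi := Int.fract_lt_one (ν i:ℝ)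
      have fi' := Int.fract_lt_one (ν' i:ℝ)
      rw [hcc]
      constructor
      · constructor <;> intro h <;> linarith
      · constructor <;> intro h <;> linarith
    · have hcpos : 0 < c := lt_of_le_of_ne hc0 (Ne.symm hcc)
      by_cases hZ : ∃ i₀, (ν i₀:ℝ) ≤ x i₀ ∧ Int.fract (ν i₀:ℝ) + c = 1
      · obtain ⟨i₀, hb0, hz0⟩ := hZ
        have ha0pos : 0 < Int.fract (ν i₀:ℝ) := by linarith
        have ha0'pos : 0 < Int.fract (ν' i₀:ℝ) := by
          rcases (Int.fract_nonneg (ν' i₀:ℝ)).lt_or_eq with h | h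
          · exact h
          · exact absurd ((h2 i₀ hb0).mpr h.symm) (by linarith)
        have ha0'lt : Int.fract (ν' i₀:ℝ) < 1 := Int.fract_lt_one _
        refine ⟨1 - Int.fract (ν' i₀:ℝ), by linarith, by linarith,
          fun h => absurd h hcc, fun _ => by linarith, fun i hi => ?_⟩
        constructor
        · have hx := hle i₀ i hb0 hi
          constructor <;> intro h
          · have h' : Int.fract (ν i₀:ℝ) ≤ Int.fract (ν i:ℝ) := by linarith
            have := hx.mp h'; linarith
          · have h' : Int.fract (ν' i₀:ℝ) ≤ Int.fract (ν' i:ℝ) := by linarith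
            have := hx.mpr h'; linarith
        · have hx := heqf i₀ i hb0 hi
          constructor <;> intro h
          · have h' : Int.fract (ν i₀:ℝ) = Int.fract (ν i:ℝ) := by linarith
            have := hx.mp h'; linarith
          · have h' : Int.fract (ν' i₀:ℝ) = Int.fract (ν' i:ℝ) := by linarith
            have := hx.mpr h'; linarith
      · push_neg at hZ
        set Wf : Finset (Fin k) :=
          Finset.univ.filter (fun i => (ν i:ℝ) ≤ x i ∧ 1 ≤ Int.fract (ν i:ℝ) + c) with hWf
        set Vf : Finset (Fin k) :=
          Finset.univ.filter (fun i => (ν i:ℝ) ≤ x i ∧ Int.fract (ν i:ℝ) + c < 1) with hVf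
        set L : Finset ℝ := insert (0:ℝ) (Wf.image fun i => 1 - Int.fract (ν' i:ℝ)) with hL
        set U : Finset ℝ := insert (1:ℝ) (Vf.image fun i => 1 - Int.fract (ν' i:ℝ)) with hU
        have hLne : L.Nonempty := ⟨0, by rw [hL]; exact Finset.mem_insert_self _ _⟩
        have hUne : U.Nonempty := ⟨1, by rw [hU]; exact Finset.mem_insert_self _ _⟩
        have key : ∀ a ∈ L, ∀ b ∈ U, a < b := by
          intro a ha b hb
          rw [hL] at ha
          rw [hU] at hb
          simp only [Finset.mem_insert, Finset.mem_image, hWf, hVf, Finset.mem_filter,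
            Finset.mem_univ, true_and] at ha hb
          rcases ha with rfl | ⟨i, ⟨hib, hiw⟩, rfl⟩ <;>
            rcases hb with rfl | ⟨j, ⟨hjb, hjw⟩, rfl⟩
          · exact one_pos
          · linarith [Int.fract_lt_one (ν' j:ℝ)]
          · have hane : Int.fract (ν i:ℝ) ≠ 0 := by intro h; rw [h] at hiw; linarith
            have : 0 < Int.fract (ν' i:ℝ) :=
              lt_of_le_of_ne (Int.fract_nonneg _)
                (fun h => hane ((h2 i hib).mpr h.symm))
            linarith
          · have h1i : 1 - c < Int.fract (ν i:ℝ) :=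
              lt_of_le_of_ne (by linarith) (fun h => hZ i hib (by linarith))
            have h2j : Int.fract (ν j:ℝ) < 1 - c := by linarith
            have := (hlt j i hjb hib).mp (by linarith)
            linarith
        have hlohi : L.max' hLne < U.min' hUne :=
          key _ (L.max'_mem hLne) _ (U.min'_mem hUne)
        have hlo0 : (0:ℝ) ≤ L.max' hLne :=
          L.le_max' 0 (by rw [hL]; exact Finset.mem_insert_self _ _)
        have hhi1 : U.min' hUne ≤ 1 :=
          U.min'_le 1 (by rw [hU]; exact Finset.mem_insert_self _ _)
        refine ⟨(L.max' hLne + U.min' hUne)/2, by linarith, by linarith,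
          fun h => absurd h hcc, fun _ => by linarith, fun i hib => ?_⟩
        by_cases hwi : 1 ≤ Int.fract (ν i:ℝ) + c
        · have hiW : i ∈ Wf := by
            rw [hWf]
            exact Finset.mem_filter.mpr ⟨Finset.mem_univ _, hib, hwi⟩
          have hmemL : 1 - Int.fract (ν' i:ℝ) ∈ L := by
            rw [hL]
            exact Finset.mem_insert_of_mem (Finset.mem_image.mpr ⟨i, hiW, rfl⟩)
          have hle' : 1 - Int.fract (ν' i:ℝ) ≤ L.max' hLne := L.le_max' _ hmemL
          constructor
          · exact iff_of_true hwi (by linarith)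
          · exact iff_of_false (hZ i hib) (by linarith)
        · have hiV : i ∈ Vf := by
            rw [hVf]
            exact Finset.mem_filter.mpr ⟨Finset.mem_univ _, hib, not_le.mp hwi⟩
          have hmemU : 1 - Int.fract (ν' i:ℝ) ∈ U := by
            rw [hU]
            exact Finset.mem_insert_of_mem (Finset.mem_image.mpr ⟨i, hiV, rfl⟩)
          have hle' : U.min' hUne ≤ 1 - Int.fract (ν' i:ℝ) := U.min'_le _ hmemU
          constructor
          · exact iff_of_false hwi (by linarith)
          · exact iff_of_false (hZ i hib) (by linarith)
  have hceq : c = 0 ↔ c' = 0 := by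
    constructor
    · exact hcz
    · intro h
      by_contra hne
      exact absurd h (hcp (lt_of_le_of_ne hc0 (Ne.symm hne))).ne'
  have hd'nn : (0:ℝ) ≤ (m:ℝ) + c' := by linarith
  have hd'co : ((Real.toNNReal ((m:ℝ) + c')) : ℝ) = (m:ℝ) + c' :=
    Real.coe_toNNReal _ hd'nn
  have bnd : ∀ t : ℝ, 0 ≤ Int.fract t + c ∧ Int.fract t + c < 2 := fun t =>
    ⟨add_nonneg (Int.fract_nonneg t) hc0, by linarith [Int.fract_lt_one t]⟩
  have bnd' : ∀ t : ℝ, 0 ≤ Int.fract t + c' ∧ Int.fract t + c' < 2 := fun t =>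
    ⟨add_nonneg (Int.fract_nonneg t) hc'0, by linarith [Int.fract_lt_one t]⟩
  refine ⟨Real.toNNReal ((m:ℝ) + c'), ?_, ?_, ?_⟩
  · -- condition (i)
    intro i
    simp only [NNReal.coe_add, hd'co]
    by_cases hib : (ν i:ℝ) ≤ x i
    · left
      rw [hdmc, (compshift (ν i:ℝ) m c).1, (compshift (ν' i:ℝ) m c').1, hfl i hib,
        floor01 (bnd (ν i:ℝ)).1 (bnd (ν i:ℝ)).2,
        floor01 (bnd' (ν' i:ℝ)).1 (bnd' (ν' i:ℝ)).2]
      have hiff := (hM i hib).1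
      by_cases hw : 1 ≤ Int.fract (ν i:ℝ) + c
      · rw [if_pos hw, if_pos (hiff.mp hw)]
      · rw [if_neg hw, if_neg (fun h => hw (hiff.mpr h))]
    · have hxi : (x i:ℝ) < (ν i:ℝ) := not_le.mp hib
      by_cases hx' : (x i:ℝ) < (ν' i:ℝ) + ((m:ℝ) + c')
      · exact Or.inr ⟨by linarith, hx'⟩
      · left
        push_neg at hx'
        rcases h1 i with hfe | ⟨_, hgt⟩
        · have h5 : (x i:ℝ) ≤ (⌊(ν i:ℝ)⌋ : ℝ) := by
            have h5' : ((x i : ℕ) : ℤ) ≤ ⌊(ν i:ℝ)⌋ := Int.le_floor.mpr (by exact_mod_cast hxi.le)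
            exact_mod_cast h5'
          have h6 : (⌊(ν' i:ℝ)⌋:ℝ) ≤ (ν' i:ℝ) := Int.floor_le _
          rw [hfe] at h5
          have e2 : (m:ℝ) + c' = 0 := by linarith
          have e3 : c' = 0 := by linarith
          have e4 : c = 0 := hceq.mpr e3
          have e5 : (d:ℝ) = 0 := by rw [hdmc, e4]; linarith
          rw [e5, e2, add_zero, add_zero]
          exact hfe
        · exact absurd hgt (not_lt.mpr (by linarith))
  · -- condition (ii)
    intro i hi
    simp only [NNReal.coe_add, hd'co] at hi ⊢
    have hib : (ν i:ℝ) ≤ x i := by linarith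
    rw [hdmc, (compshift (ν i:ℝ) m c).2, (compshift (ν' i:ℝ) m c').2,
      fract_zero01 (bnd (ν i:ℝ)).1 (bnd (ν i:ℝ)).2,
      fract_zero01 (bnd' (ν' i:ℝ)).1 (bnd' (ν' i:ℝ)).2]
    refine or_congr ?_ ((hM i hib).2)
    constructor <;> intro h
    · have hc4 : c = 0 := le_antisymm (by linarith [Int.fract_nonneg (ν i:ℝ)]) hc0
      have ha4 : Int.fract (ν i:ℝ) = 0 := by linarith
      have := (h2 i hib).mp ha4
      have := hceq.mp hc4
      linarith
    · have hc4 : c' = 0 := le_antisymm (by linarith [Int.fract_nonneg (ν' i:ℝ)]) hc'0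
      have ha4 : Int.fract (ν' i:ℝ) = 0 := by linarith
      have := (h2 i hib).mpr ha4
      have := hceq.mpr hc4
      linarith
  · -- condition (iii)
    intro i j hij hi hj
    simp only [NNReal.coe_add, hd'co] at hi hj ⊢
    have hib : (ν i:ℝ) ≤ x i := by linarith
    have hjb : (ν j:ℝ) ≤ x j := by linarith
    rw [hdmc, (compshift (ν i:ℝ) m c).2, (compshift (ν j:ℝ) m c).2,
      (compshift (ν' i:ℝ) m c').2, (compshift (ν' j:ℝ) m c').2,
      fract01 (bnd (ν i:ℝ)).1 (bnd (ν i:ℝ)).2,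
      fract01 (bnd (ν j:ℝ)).1 (bnd (ν j:ℝ)).2,
      fract01 (bnd' (ν' i:ℝ)).1 (bnd' (ν' i:ℝ)).2,
      fract01 (bnd' (ν' j:ℝ)).1 (bnd' (ν' j:ℝ)).2]
    have hwi := (hM i hib).1
    have hwj := (hM j hjb).1
    have horder := hle i j hib hjb
    by_cases hWi : 1 ≤ Int.fract (ν i:ℝ) + c <;>
      by_cases hWj : 1 ≤ Int.fract (ν j:ℝ) + c
    · rw [if_pos hWi, if_pos hWj, if_pos (hwi.mp hWi), if_pos (hwj.mp hWj)]
      constructor <;> intro h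
      · linarith [horder.mp (by linarith)]
      · linarith [horder.mpr (by linarith)]
    · rw [if_pos hWi, if_neg hWj, if_pos (hwi.mp hWi), if_neg (fun h => hWj (hwj.mpr h))]
      exact iff_of_true
        (by linarith [Int.fract_lt_one (ν i:ℝ), Int.fract_nonneg (ν j:ℝ)])
        (by linarith [Int.fract_lt_one (ν' i:ℝ), Int.fract_nonneg (ν' j:ℝ),
          hwi.mp hWi])
    · rw [if_neg hWi, if_pos hWj, if_neg (fun h => hWi (hwi.mpr h)), if_pos (hwj.mp hWj)]
      exact iff_of_false
        (by push_neg; linarith [Int.fract_lt_one (ν j:ℝ), Int.fract_nonneg (ν i:ℝ)])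
        (by push_neg; linarith [Int.fract_lt_one (ν' j:ℝ), Int.fract_nonneg (ν' i:ℝ)])
    · rw [if_neg hWi, if_neg hWj, if_neg (fun h => hWi (hwi.mpr h)),
        if_neg (fun h => hWj (hwj.mpr h))]
      constructor <;> intro h
      · linarith [horder.mp (by linarith)]
      · linarith [horder.mpr (by linarith)]
end

section
/- In a finite reachability game, fix a gain profile p ∈ {0,1}^Π and a labeling λ : V → {0,1}. There exists a play ρ from a vertex v with gain profile exactly p that is λ-consistent if and only if there exists a play from v with gain profile p in the subgame obtained by deleting every vertex u belonging to a player i with pᵢ = 0 and λ(u) = 1 (together with its incident edges). -/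
/-- In a finite (extended) reachability game — target sets being forward-persistent
along edges, as in the extended game — for a gain profile `p` and a labeling `lam`:
there is a `lam`-consistent play from `v` with gain profile exactly `p` iff there is a
play from `v` with gain profile `p` in the subgame obtained by deleting every vertex
`u` owned by a player `i` with `pᵢ = 0` and `lam u = 1`. -/
theorem stmt15 {V P : Type} [Fintype V] [Fintype P]
    (E : V → V → Prop) (owner : V → P) (F : P → Set V)
    (hpersist : ∀ (i : P) (u u' : V), E u u' → u ∈ F i → u' ∈ F i)
    (p : P → Prop) (lam : V → Prop) (v : V) :
    (∃ ρ : ℕ → V, ρ 0 = v ∧ (∀ n, E (ρ n) (ρ (n + 1))) ∧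
      (∀ i, (∃ n, ρ n ∈ F i) ↔ p i) ∧
      (∀ n, lam (ρ n) → ∃ m, ρ (n + m) ∈ F (owner (ρ n)))) ↔
    (∃ ρ : ℕ → V, ρ 0 = v ∧ (∀ n, E (ρ n) (ρ (n + 1))) ∧
      (∀ i, (∃ n, ρ n ∈ F i) ↔ p i) ∧
      (∀ n, ¬(¬p (owner (ρ n)) ∧ lam (ρ n)))) := by
  constructor
  · rintro ⟨ρ, h0, hE, hg, hc⟩
    exact ⟨ρ, h0, hE, hg, fun n ⟨hnp, hl⟩ =>
      hnp ((hg (owner (ρ n))).1 (let ⟨m, hm⟩ := hc n hl; ⟨n + m, hm⟩))⟩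
  · rintro ⟨ρ, h0, hE, hg, hc⟩
    have pers : ∀ i m k, ρ m ∈ F i → ρ (m + k) ∈ F i := by
      intro i m k hm
      induction k with
      | zero => exact hm
      | succ k ih => exact hpersist i _ _ (hE (m + k)) ih
    refine ⟨ρ, h0, hE, hg, fun n hl => ?_⟩
    have hp : p (owner (ρ n)) := by
      by_contra hnp; exact hc n ⟨hnp, hl⟩
    obtain ⟨m, hm⟩ := (hg (owner (ρ n))).2 hp
    rcases le_or_gt m n with h | h
    · refine ⟨0, ?_⟩
      have := pers _ m (n - m) hm
      rw [show m + (n - m) = n by omega] at this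
      simpa using this
    · exact ⟨m - n, by have := pers _ m 0 hm; rw [show n + (m - n) = m by omega]; simpa using hm⟩
end

section
/- The number of regions of the clock-valuation region equivalence over k clocks with maximal constants x₁,…,x_k is finite; in particular, it is bounded by k! · 2^k · ∏_{i=1}^{k} (2xᵢ + 2). -/
namespace Stmt18Aux

/-- For a monotone tuple, two entries are equal iff no index strictly between them
starts a strictly new value. -/
lemma mono_eq_iff_chain {n : ℕ} {h : Fin n → ℝ} (mh : Monotone h) {m' m : Fin n}
    (hle : m' ≤ m) :
    h m' = h m ↔ ∀ t, m' < t → t ≤ m → ¬ (∀ s, s < t → h s < h t) := by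
  constructor
  · intro heq t ht1 ht2 hB
    have h1 : h m' < h t := hB m' ht1
    have h2 : h t ≤ h m := mh ht2
    rw [heq] at h1
    exact absurd h2 (not_le.mpr h1)
  · intro hchain
    by_contra hne
    have hlt : h m' < h m := lt_of_le_of_ne (mh hle) hne
    classical
    set S : Finset (Fin n) := Finset.univ.filter (fun t => t ≤ m ∧ h m' < h t) with hS
    have hmS : m ∈ S := by simp [hS, hlt]
    have hne' : S.Nonempty := ⟨m, hmS⟩
    set t₀ := S.min' hne' with ht₀def
    have ht₀ : t₀ ≤ m ∧ h m' < h t₀ := by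
      have := S.min'_mem hne'
      simpa [hS] using this
    have hm't₀ : m' < t₀ := by
      by_contra hh
      push_neg at hh
      exact absurd (mh hh) (not_le.mpr ht₀.2)
    refine hchain t₀ hm't₀ ht₀.1 ?_
    intro s hs
    by_cases hms : h m' < h s
    · have hsS : s ∈ S := by
        simp only [hS, Finset.mem_filter, Finset.mem_univ, true_and]
        exact ⟨le_trans hs.le ht₀.1, hms⟩
      exact absurd (S.min'_le s hsS) (not_le.mpr hs)
    · push_neg at hms
      exact lt_of_le_of_lt hms ht₀.2

/-- Two monotone tuples with the same "strictly new value" pattern have the same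
order profile. -/
lemma profile_transfer {n : ℕ} {h h' : Fin n → ℝ} (mh : Monotone h) (mh' : Monotone h')
    (hBB : ∀ t : Fin n, (∀ s, s < t → h s < h t) ↔ (∀ s, s < t → h' s < h' t)) :
    ∀ a b, h a ≤ h b ↔ h' a ≤ h' b := by
  have key : ∀ a b, a ≤ b → (h a = h b ↔ h' a = h' b) := by
    intro a b hab
    rw [mono_eq_iff_chain mh hab, mono_eq_iff_chain mh' hab]
    exact forall_congr' fun t => by
      constructor
      · intro hh h1 h2 hB; exact hh h1 h2 ((hBB t).mpr hB)
      · intro hh h1 h2 hB; exact hh h1 h2 ((hBB t).mp hB)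
  intro a b
  rcases le_total a b with hab | hba
  · simp [mh hab, mh' hab]
  · constructor
    · intro hle
      have heq : h b = h a := le_antisymm (mh hba) hle
      exact ((key b a hba).mp heq).ge
    · intro hle
      have heq : h' b = h' a := le_antisymm (mh' hba) hle
      exact ((key b a hba).mpr heq).ge

variable (k : ℕ) (x : Fin k → ℕ)

/-- Padded fractional parts: `-1` on unbounded clocks. -/
noncomputable def gv (ν : Fin k → NNReal) : Fin k → ℝ :=
  fun i => if (ν i : ℝ) ≤ (x i : ℝ) then Int.fract ((ν i : ℝ)) else -1

/-- Per-clock code. -/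
noncomputable def codeVal (ν : Fin k → NNReal) (i : Fin k) : ℕ :=
  if (ν i : ℝ) ≤ (x i : ℝ) then
    2 * (⌊(ν i : ℝ)⌋).toNat + (if Int.fract ((ν i : ℝ)) = 0 then 0 else 1)
  else 2 * x i + 1

lemma neg_one_le_gv (ν : Fin k → NNReal) (i : Fin k) : (-1 : ℝ) ≤ gv k x ν i := by
  unfold gv
  split_ifs
  · exact le_trans (by norm_num) (Int.fract_nonneg _)
  · exact le_refl _

lemma gv_of_bounded {ν : Fin k → NNReal} {i : Fin k} (hb : (ν i : ℝ) ≤ (x i : ℝ)) :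
    gv k x ν i = Int.fract ((ν i : ℝ)) := if_pos hb

lemma gv_of_not_bounded {ν : Fin k → NNReal} {i : Fin k} (hb : ¬ (ν i : ℝ) ≤ (x i : ℝ)) :
    gv k x ν i = -1 := if_neg hb

lemma codeVal_le_of_bounded {ν : Fin k → NNReal} {i : Fin k} (hb : (ν i : ℝ) ≤ (x i : ℝ)) :
    codeVal k x ν i ≤ 2 * x i := by
  have h0 : (0 : ℝ) ≤ (ν i : ℝ) := (ν i).coe_nonneg
  have hfl : ⌊(ν i : ℝ)⌋ ≤ (x i : ℤ) := by
    have := Int.floor_le_floor hb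
    rwa [Int.floor_natCast] at this
  have htn : (⌊(ν i : ℝ)⌋).toNat ≤ x i := Int.toNat_le.mpr hfl
  unfold codeVal
  rw [if_pos hb]
  rcases lt_or_eq_of_le htn with hlt | heq
  · split_ifs <;> omega
  · have hflz : ⌊(ν i : ℝ)⌋ = (x i : ℤ) := by
      rw [← Int.toNat_of_nonneg (Int.floor_nonneg.2 h0), heq]
    have hfr : Int.fract ((ν i : ℝ)) = 0 := by
      by_contra hne
      have hpos : 0 < Int.fract ((ν i : ℝ)) := (Int.fract_nonneg _).lt_of_ne (Ne.symm hne)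
      have := Int.floor_add_fract ((ν i : ℝ))
      rw [hflz] at this
      push_cast at this
      nlinarith
    rw [if_pos hfr, heq]
    omega

lemma codeVal_lt (ν : Fin k → NNReal) (i : Fin k) : codeVal k x ν i < 2 * x i + 2 := by
  by_cases hb : (ν i : ℝ) ≤ (x i : ℝ)
  · have := codeVal_le_of_bounded k x hb
    omega
  · unfold codeVal
    rw [if_neg hb]
    omega

lemma bounded_iff_codeVal {ν : Fin k → NNReal} {i : Fin k} :
    (ν i : ℝ) ≤ (x i : ℝ) ↔ codeVal k x ν i ≤ 2 * x i := by
  constructor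
  · exact codeVal_le_of_bounded k x
  · intro h
    by_contra hb
    unfold codeVal at h
    rw [if_neg hb] at h
    omega

/-- tie / threshold bit vector -/
noncomputable def bvec (ν : Fin k → NNReal) : Fin k → Prop :=
  fun m =>
    if (ν (Tuple.sort (gv k x ν) m) : ℝ) ≤ (x (Tuple.sort (gv k x ν) m) : ℝ) then
      (∀ t, t < m → gv k x ν (Tuple.sort (gv k x ν) t) < gv k x ν (Tuple.sort (gv k x ν) m))
    else ((ν (Tuple.sort (gv k x ν) m) : ℝ) < (x (Tuple.sort (gv k x ν) m) : ℝ) + 1)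

/-- The complete invariant. -/
noncomputable def inv (ν : Fin k → NNReal) :
    (∀ i : Fin k, Fin (2 * x i + 2)) × Equiv.Perm (Fin k) × (Fin k → Prop) :=
  (fun i => ⟨codeVal k x ν i, codeVal_lt k x ν i⟩, Tuple.sort (gv k x ν), bvec k x ν)

lemma F2 {ν μ : Fin k → NNReal} {i : Fin k} (hb : (ν i : ℝ) ≤ (x i : ℝ))
    (hb' : (μ i : ℝ) ≤ (x i : ℝ)) (h : codeVal k x ν i = codeVal k x μ i) :
    ⌊(ν i : ℝ)⌋ = ⌊(μ i : ℝ)⌋ ∧ (Int.fract ((ν i : ℝ)) = 0 ↔ Int.fract ((μ i : ℝ)) = 0) := by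
  have h0 : (0 : ℝ) ≤ (ν i : ℝ) := (ν i).coe_nonneg
  have h0' : (0 : ℝ) ≤ (μ i : ℝ) := (μ i).coe_nonneg
  unfold codeVal at h
  rw [if_pos hb, if_pos hb'] at h
  have key : (⌊(ν i : ℝ)⌋).toNat = (⌊(μ i : ℝ)⌋).toNat ∧
      (Int.fract ((ν i : ℝ)) = 0 ↔ Int.fract ((μ i : ℝ)) = 0) := by
    split_ifs at h with h1 h2 h2
    · exact ⟨by omega, by simp [h1, h2]⟩
    · exact absurd h (by omega)
    · exact absurd h (by omega)
    · exact ⟨by omega, by simp [h1, h2]⟩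
  refine ⟨?_, key.2⟩
  rw [← Int.toNat_of_nonneg (Int.floor_nonneg.2 h0),
    ← Int.toNat_of_nonneg (Int.floor_nonneg.2 h0'), key.1]

/-- Main transfer lemma: the invariant determines the class. -/
lemma transfer {ν μ : Fin k → NNReal} (hinv : inv k x ν = inv k x μ) :
    ∀ ν', RegEquiv k x ν ν' → RegEquiv k x μ ν' := by
  have hcode : ∀ i, codeVal k x ν i = codeVal k x μ i := by
    intro i
    have := congrArg (fun p => (p.1 i : ℕ)) hinv
    simpa [inv] using this
  have hσ : Tuple.sort (gv k x μ) = Tuple.sort (gv k x ν) := by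
    have := congrArg (fun p => p.2.1) hinv
    simpa [inv] using this.symm
  have hbv : bvec k x ν = bvec k x μ := by
    have := congrArg (fun p => p.2.2) hinv
    simpa [inv] using this
  -- F1 : boundedness coincides
  have F1 : ∀ i, ((ν i : ℝ) ≤ (x i : ℝ)) ↔ ((μ i : ℝ) ≤ (x i : ℝ)) := by
    intro i
    rw [bounded_iff_codeVal k x, bounded_iff_codeVal k x, hcode i]
  -- F3 : threshold bit for unbounded clocks
  have F3 : ∀ i, ¬ ((ν i : ℝ) ≤ (x i : ℝ)) →
      (((ν i : ℝ) < (x i : ℝ) + 1) ↔ ((μ i : ℝ) < (x i : ℝ) + 1)) := by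
    intro i hub
    have hubμ : ¬ ((μ i : ℝ) ≤ (x i : ℝ)) := fun hc => hub ((F1 i).mpr hc)
    have hb1 : bvec k x ν ((Tuple.sort (gv k x ν)).symm i)
        = bvec k x μ ((Tuple.sort (gv k x ν)).symm i) := by rw [hbv]
    unfold bvec at hb1
    rw [hσ] at hb1
    rw [Equiv.apply_symm_apply] at hb1
    rw [if_neg hub, if_neg hubμ] at hb1
    exact iff_of_eq hb1
  -- F4 : order profile of fractional parts on bounded clocks coincides
  have hmono : Monotone (gv k x ν ∘ (Tuple.sort (gv k x ν))) := Tuple.monotone_sort (gv k x ν)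
  have hmono' : Monotone (gv k x μ ∘ (Tuple.sort (gv k x ν))) := by
    rw [← hσ]
    exact Tuple.monotone_sort (gv k x μ)
  have hBB : ∀ t : Fin k,
      (∀ s, s < t → (gv k x ν ∘ (Tuple.sort (gv k x ν))) s
          < (gv k x ν ∘ (Tuple.sort (gv k x ν))) t) ↔
      (∀ s, s < t → (gv k x μ ∘ (Tuple.sort (gv k x ν))) s
          < (gv k x μ ∘ (Tuple.sort (gv k x ν))) t) := by
    intro t
    simp only [Function.comp_apply]
    by_cases hbt : (ν (Tuple.sort (gv k x ν) t) : ℝ) ≤ (x (Tuple.sort (gv k x ν) t) : ℝ)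
    · have hbtμ : (μ (Tuple.sort (gv k x ν) t) : ℝ) ≤ (x (Tuple.sort (gv k x ν) t) : ℝ) :=
        (F1 _).mp hbt
      have hb1 : bvec k x ν t = bvec k x μ t := by rw [hbv]
      unfold bvec at hb1
      rw [hσ] at hb1
      rw [if_pos hbt, if_pos hbtμ] at hb1
      exact iff_of_eq hb1
    · have hbtμ : ¬ (μ (Tuple.sort (gv k x ν) t) : ℝ) ≤ (x (Tuple.sort (gv k x ν) t) : ℝ) :=
        fun hc => hbt ((F1 _).mpr hc)
      have hνt : gv k x ν (Tuple.sort (gv k x ν) t) = -1 := gv_of_not_bounded k x hbt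
      have hμt : gv k x μ (Tuple.sort (gv k x ν) t) = -1 := gv_of_not_bounded k x hbtμ
      constructor
      · intro hB s hst
        exfalso
        have := hB s hst
        rw [hνt] at this
        exact absurd (neg_one_le_gv k x ν _) (not_le.mpr this)
      · intro hB s hst
        exfalso
        have := hB s hst
        rw [hμt] at this
        exact absurd (neg_one_le_gv k x μ _) (not_le.mpr this)
  have hprof := profile_transfer hmono hmono' hBB
  have F4 : ∀ i j, (ν i : ℝ) ≤ (x i : ℝ) → (ν j : ℝ) ≤ (x j : ℝ) →
      (Int.fract ((ν i : ℝ)) ≤ Int.fract ((ν j : ℝ)) ↔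
        Int.fract ((μ i : ℝ)) ≤ Int.fract ((μ j : ℝ))) := by
    intro i j hbi hbj
    have hbiμ : (μ i : ℝ) ≤ (x i : ℝ) := (F1 i).mp hbi
    have hbjμ : (μ j : ℝ) ≤ (x j : ℝ) := (F1 j).mp hbj
    have := hprof ((Tuple.sort (gv k x ν)).symm i) ((Tuple.sort (gv k x ν)).symm j)
    simp only [Function.comp_apply, Equiv.apply_symm_apply] at this
    rw [gv_of_bounded k x hbi, gv_of_bounded k x hbj, gv_of_bounded k x hbiμ,
      gv_of_bounded k x hbjμ] at this
    exact this
  -- now the actual transfer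
  intro ν' hre
  obtain ⟨h1, h2, h3⟩ := hre
  refine ⟨?_, ?_, ?_⟩
  · intro i
    by_cases hbi : (ν i : ℝ) ≤ (x i : ℝ)
    · have hbiμ : (μ i : ℝ) ≤ (x i : ℝ) := (F1 i).mp hbi
      rcases h1 i with hfl | ⟨hx, _⟩
      · left
        rw [← (F2 k x hbi hbiμ (hcode i)).1]
        exact hfl
      · exact absurd hx (not_lt.mpr hbi)
    · have hbiμ : ¬ (μ i : ℝ) ≤ (x i : ℝ) := fun hc => hbi ((F1 i).mpr hc)
      have hxμ : (x i : ℝ) < (μ i : ℝ) := not_le.mp hbiμ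
      have hxν : (x i : ℝ) < (ν i : ℝ) := not_le.mp hbi
      by_cases hX : (ν i : ℝ) < (x i : ℝ) + 1
      · have hXμ : (μ i : ℝ) < (x i : ℝ) + 1 := (F3 i hbi).mp hX
        have hflν : ⌊(ν i : ℝ)⌋ = (x i : ℤ) := by
          rw [Int.floor_eq_iff]
          constructor
          · push_cast; exact hxν.le
          · push_cast; exact hX
        have hflμ : ⌊(μ i : ℝ)⌋ = (x i : ℤ) := by
          rw [Int.floor_eq_iff]
          constructor
          · push_cast; exact hxμ.le
          · push_cast; exact hXμ
        rcases h1 i with hfl | ⟨_, hx'⟩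
        · left
          rw [hflμ, ← hflν]
          exact hfl
        · right
          exact ⟨hxμ, hx'⟩
      · rcases h1 i with hfl | ⟨_, hx'⟩
        · right
          refine ⟨hxμ, ?_⟩
          have hge : (x i : ℝ) + 1 ≤ (ν i : ℝ) := not_lt.mp hX
          have hflν : ((x i : ℤ) + 1) ≤ ⌊(ν i : ℝ)⌋ := by
            rw [Int.le_floor]
            push_cast
            exact hge
          have hflν' : ((x i : ℤ) + 1) ≤ ⌊(ν' i : ℝ)⌋ := hfl ▸ hflν
          have : ((x i : ℝ) + 1) ≤ (ν' i : ℝ) := by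
            calc ((x i : ℝ) + 1) = (((x i : ℤ) + 1 : ℤ) : ℝ) := by push_cast; ring
            _ ≤ (⌊(ν' i : ℝ)⌋ : ℝ) := by exact_mod_cast hflν'
            _ ≤ (ν' i : ℝ) := Int.floor_le _
          linarith
        · right
          exact ⟨hxμ, hx'⟩
  · intro i hbiμ
    have hbi : (ν i : ℝ) ≤ (x i : ℝ) := (F1 i).mpr hbiμ
    have hf := (F2 k x hbi hbiμ (hcode i)).2
    exact hf.symm.trans (h2 i hbi)
  · intro i j hij hbiμ hbjμ
    have hbi : (ν i : ℝ) ≤ (x i : ℝ) := (F1 i).mpr hbiμ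
    have hbj : (ν j : ℝ) ≤ (x j : ℝ) := (F1 j).mpr hbjμ
    exact (F4 i j hbi hbj).symm.trans (h3 i j hij hbi hbj)

end Stmt18Aux

/-- The set of regions (equivalence classes of `≈`) is finite, bounded by
`k! · 2^k · ∏ᵢ (2xᵢ + 2)`. -/
theorem stmt18 (k : ℕ) (x : Fin k → ℕ) :
    {C : Set (Fin k → NNReal) | ∃ ν, C = {ν' | RegEquiv k x ν ν'}}.Finite ∧
    {C : Set (Fin k → NNReal) | ∃ ν, C = {ν' | RegEquiv k x ν ν'}}.ncard ≤
      Nat.factorial k * 2 ^ k * ∏ i : Fin k, (2 * x i + 2) := by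
  classical
  set G : ((∀ i : Fin k, Fin (2 * x i + 2)) × Equiv.Perm (Fin k) × (Fin k → Prop))
      → Set (Fin k → NNReal) :=
    fun s => {ν' | ∃ ν, Stmt18Aux.inv k x ν = s ∧ RegEquiv k x ν ν'} with hG
  have hfact : ∀ ν, {ν' | RegEquiv k x ν ν'} = G (Stmt18Aux.inv k x ν) := by
    intro ν
    ext ν'
    simp only [hG, Set.mem_setOf_eq]
    constructor
    · intro h
      exact ⟨ν, rfl, h⟩
    · rintro ⟨μ, hμ, h⟩
      exact Stmt18Aux.transfer k x hμ ν' h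
  have hsub : {C : Set (Fin k → NNReal) | ∃ ν, C = {ν' | RegEquiv k x ν ν'}} ⊆ Set.range G := by
    rintro C ⟨ν, rfl⟩
    exact ⟨Stmt18Aux.inv k x ν, (hfact ν).symm⟩
  have hfin : (Set.range G).Finite := Set.finite_range G
  have hcard : (Set.range G).ncard ≤
      Fintype.card ((∀ i : Fin k, Fin (2 * x i + 2)) × Equiv.Perm (Fin k) × (Fin k → Prop)) := by
    rw [← Set.image_univ]
    refine le_trans (Set.ncard_image_le Set.finite_univ) ?_
    rw [Set.ncard_univ, Nat.card_eq_fintype_card]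
  have hcardeq :
      Fintype.card ((∀ i : Fin k, Fin (2 * x i + 2)) × Equiv.Perm (Fin k) × (Fin k → Prop)) =
      Nat.factorial k * 2 ^ k * ∏ i : Fin k, (2 * x i + 2) := by
    rw [Fintype.card_prod, Fintype.card_prod, Fintype.card_pi, Fintype.card_perm,
      Fintype.card_fun, Fintype.card_prop, Fintype.card_fin]
    simp only [Fintype.card_fin]
    ring
  refine ⟨hfin.subset hsub, ?_⟩
  calc {C : Set (Fin k → NNReal) | ∃ ν, C = {ν' | RegEquiv k x ν ν'}}.ncard
      ≤ (Set.range G).ncard := Set.ncard_le_ncard hsub hfin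
    _ ≤ Fintype.card ((∀ i : Fin k, Fin (2 * x i + 2)) × Equiv.Perm (Fin k) × (Fin k → Prop)) :=
        hcard
    _ = _ := hcardeq
end
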